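/- Let (W,S) be a finite Coxeter system with set of reflections T, alternating subgroup W^+, Coxeter rank d and exponents 1 = e_1, e_2, …, e_d, and fix s_0 ∈ S with T_0 = {s_0 t : t ∈ T}. Then Σ_{w ∈ W^+} q^{ℓ_{T_0}(w)} = W_T(q)/(1+q) = ∏_{i=2}^{d} (1 + e_i q), where W_T(q) = Σ_{w∈W} q^{ℓ_T(w)} = ∏_{i=1}^{d} (1 + e_i q). -/

import Mathlib

attribute [local instance] Classical.propDecidable

/-- The absolute length of `w` with respect to a set `T`: the minimum length of a word
for `w` in the alphabet `T`. -/
noncomputable def absLength {W : Type*} [Group W] (T : Set W) (w : W) : ℕ :=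
  sInf {n | ∃ l : List W, (∀ t ∈ l, t ∈ T) ∧ l.prod = w ∧ l.length = n}

/-- The set of reflections `T` of a Coxeter system. -/
def reflSet {B W : Type*} [Group W] {M : CoxeterMatrix B} (cs : CoxeterSystem M W) :
    Set W := {t | cs.IsReflection t}

/-- The set `T₀ = {s₀ t : t ∈ T}`. -/
def tZero {B W : Type*} [Group W] {M : CoxeterMatrix B} (cs : CoxeterSystem M W)
    (i₀ : B) : Set W := {w | ∃ t, cs.IsReflection t ∧ w = cs.simple i₀ * t}

/-- The alternating subgroup `W⁺` of a Coxeter system: the kernel of the sign character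
(which maps every simple reflection to `−1`). -/
def alternating {B W : Type*} [Group W] {M : CoxeterMatrix B} (cs : CoxeterSystem M W) :
    Subgroup W := cs.lengthParity.ker

section Aux

variable {B W : Type*} [Group W] {M : CoxeterMatrix B} (cs : CoxeterSystem M W)

lemma absLength_le {T : Set W} {w : W} {l : List W} (hl : ∀ t ∈ l, t ∈ T)
    (hp : l.prod = w) : absLength T w ≤ l.length :=
  Nat.sInf_le ⟨l, hl, hp, rfl⟩

lemma exists_word_absLength {T : Set W} {w : W}
    (h : ∃ l : List W, (∀ t ∈ l, t ∈ T) ∧ l.prod = w) :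
    ∃ l : List W, (∀ t ∈ l, t ∈ T) ∧ l.prod = w ∧ l.length = absLength T w := by
  obtain ⟨l, h1, h2⟩ := h
  exact Nat.sInf_mem (⟨l.length, l, h1, h2, rfl⟩ :
    {n | ∃ l : List W, (∀ t ∈ l, t ∈ T) ∧ l.prod = w ∧ l.length = n}.Nonempty)

lemma exists_reflWord (w : W) :
    ∃ l : List W, (∀ t ∈ l, t ∈ reflSet cs) ∧ l.prod = w := by
  obtain ⟨ω, -, rfl⟩ := cs.exists_reduced_word w
  refine ⟨ω.map cs.simple, ?_, rfl⟩
  intro t ht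
  obtain ⟨i, -, rfl⟩ := List.mem_map.mp ht
  exact cs.isReflection_simple i

lemma parity_of_reflList (l : List W) (h : ∀ t ∈ l, t ∈ reflSet cs) :
    cs.lengthParity l.prod = Multiplicative.ofAdd ((l.length : ℕ) : ZMod 2) := by
  induction l with
  | nil => simp
  | cons t l ih =>
    have ht : cs.lengthParity t = Multiplicative.ofAdd (1 : ZMod 2) := by
      obtain ⟨u, i, rfl⟩ := h t (List.mem_cons_self)
      simp [cs.lengthParity_simple]
    rw [List.prod_cons, map_mul, ht, ih (fun x hx => h x (List.mem_cons_of_mem _ hx)),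
      ← ofAdd_add, List.length_cons]
    congr 1
    push_cast
    ring

lemma tZero_to_refl (i₀ : B) :
    ∀ l : List W, (∀ x ∈ l, x ∈ tZero cs i₀) →
      ∃ m : List W, (∀ x ∈ m, x ∈ reflSet cs) ∧ m.length = l.length ∧
        l.prod = cs.simple i₀ ^ l.length * m.prod := by
  intro l
  induction l with
  | nil => exact fun _ => ⟨[], by simp, rfl, by simp⟩
  | cons x l ih =>
    intro h
    obtain ⟨m, hm, hlen, hprod⟩ := ih (fun y hy => h y (List.mem_cons_of_mem _ hy))
    obtain ⟨t, ht, rfl⟩ := h x (List.mem_cons_self)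
    refine ⟨((cs.simple i₀ ^ l.length)⁻¹ * t * cs.simple i₀ ^ l.length) :: m, ?_,
      by simp [hlen], ?_⟩
    · intro y hy
      rcases List.mem_cons.mp hy with rfl | hy
      · simpa [reflSet] using ht.conj (cs.simple i₀ ^ l.length)⁻¹
      · exact hm y hy
    · rw [List.prod_cons, List.prod_cons, hprod, List.length_cons, pow_succ']
      group

lemma refl_to_tZero (i₀ : B) :
    ∀ m : List W, (∀ x ∈ m, x ∈ reflSet cs) →
      ∃ l : List W, (∀ x ∈ l, x ∈ tZero cs i₀) ∧ l.length = m.length ∧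
        l.prod = cs.simple i₀ ^ m.length * m.prod := by
  intro m
  induction m with
  | nil => exact fun _ => ⟨[], by simp, rfl, by simp⟩
  | cons t m ih =>
    intro h
    obtain ⟨l, hl, hlen, hprod⟩ := ih (fun y hy => h y (List.mem_cons_of_mem _ hy))
    have ht : cs.IsReflection t := h t (List.mem_cons_self)
    refine ⟨(cs.simple i₀ *
        (cs.simple i₀ ^ m.length * t * (cs.simple i₀ ^ m.length)⁻¹)) :: l, ?_,
      by simp [hlen], ?_⟩
    · intro y hy
      rcases List.mem_cons.mp hy with rfl | hy
      · exact ⟨_, ht.conj (cs.simple i₀ ^ m.length), rfl⟩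
      · exact hl y hy
    · rw [List.prod_cons, List.prod_cons, hprod, List.length_cons, pow_succ']
      group

lemma simple_pow_even (i₀ : B) {n : ℕ} (hn : Even n) : cs.simple i₀ ^ n = 1 := by
  obtain ⟨k, rfl⟩ := hn
  rw [← two_mul, pow_mul, cs.simple_sq, one_pow]

lemma simple_pow_odd (i₀ : B) {n : ℕ} (hn : Odd n) :
    cs.simple i₀ ^ n = cs.simple i₀ := by
  obtain ⟨k, rfl⟩ := hn
  rw [pow_add, pow_mul, cs.simple_sq, one_pow, one_mul, pow_one]

lemma parity_absLength (w : W) :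
    cs.lengthParity w = Multiplicative.ofAdd ((absLength (reflSet cs) w : ℕ) : ZMod 2) := by
  obtain ⟨l, hl, hp, hn⟩ := exists_word_absLength (exists_reflWord cs w)
  conv_lhs => rw [← hp]
  rw [parity_of_reflList cs l hl, hn]

lemma even_absLength_of_parity {w : W} (hw : cs.lengthParity w = 1) :
    Even (absLength (reflSet cs) w) := by
  have h := (parity_absLength cs w).symm.trans hw
  rw [← ofAdd_zero] at h
  exact ZMod.natCast_eq_zero_iff_even.mp (Multiplicative.ofAdd.injective h)

lemma odd_absLength_of_parity (i₀ : B) {w : W} (hw : cs.lengthParity w = 1) :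
    Odd (absLength (reflSet cs) (cs.simple i₀ * w)) := by
  have h2 : cs.lengthParity (cs.simple i₀ * w) = Multiplicative.ofAdd (1 : ZMod 2) := by
    rw [map_mul, hw, mul_one, cs.lengthParity_simple]
  have h := (parity_absLength cs (cs.simple i₀ * w)).symm.trans h2
  exact ZMod.natCast_eq_one_iff_odd.mp (Multiplicative.ofAdd.injective h)

lemma absLength_tZero_eq (i₀ : B) {w : W} (hw : cs.lengthParity w = 1) :
    absLength (tZero cs i₀) w
      = min (absLength (reflSet cs) w) (absLength (reflSet cs) (cs.simple i₀ * w)) := by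
  obtain ⟨la, hla, hpa, hna⟩ := exists_word_absLength (exists_reflWord cs w)
  obtain ⟨lb, hlb, hpb, hnb⟩ :=
    exists_word_absLength (exists_reflWord cs (cs.simple i₀ * w))
  have hEa : Even (absLength (reflSet cs) w) := even_absLength_of_parity cs hw
  have hOb : Odd (absLength (reflSet cs) (cs.simple i₀ * w)) :=
    odd_absLength_of_parity cs i₀ hw
  have hle1 : absLength (tZero cs i₀) w ≤ absLength (reflSet cs) w := by
    obtain ⟨l, hl, hlen, hprod⟩ := refl_to_tZero cs i₀ la hla
    have hplw : l.prod = w := by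
      rw [hprod, hpa, hna, simple_pow_even cs i₀ hEa, one_mul]
    have h := absLength_le hl hplw
    rwa [hlen, hna] at h
  have hle2 : absLength (tZero cs i₀) w
      ≤ absLength (reflSet cs) (cs.simple i₀ * w) := by
    obtain ⟨l, hl, hlen, hprod⟩ := refl_to_tZero cs i₀ lb hlb
    have hplw : l.prod = w := by
      rw [hprod, hpb, hnb, simple_pow_odd cs i₀ hOb, ← mul_assoc,
        cs.simple_mul_simple_self i₀, one_mul]
    have h := absLength_le hl hplw
    rwa [hlen, hnb] at h
  have hne0 : ∃ l : List W, (∀ t ∈ l, t ∈ tZero cs i₀) ∧ l.prod = w := by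
    obtain ⟨l, hl, hlen, hprod⟩ := refl_to_tZero cs i₀ la hla
    exact ⟨l, hl, by rw [hprod, hpa, hna, simple_pow_even cs i₀ hEa, one_mul]⟩
  refine le_antisymm (le_min hle1 hle2) ?_
  obtain ⟨l0, hl0, hp0, hn0⟩ := exists_word_absLength hne0
  obtain ⟨m, hm, hmlen, hmprod⟩ := tZero_to_refl cs i₀ l0 hl0
  rcases Nat.even_or_odd l0.length with hev | hod
  · have hmp : m.prod = w := by
      have h := hmprod
      rw [hp0, simple_pow_even cs i₀ hev, one_mul] at h
      exact h.symm
    have h := absLength_le hm hmp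
    rw [hmlen, hn0] at h
    exact le_trans (min_le_left _ _) h
  · have hmp : m.prod = cs.simple i₀ * w := by
      have h := hmprod
      rw [hp0, simple_pow_odd cs i₀ hod] at h
      rw [h, ← mul_assoc, cs.simple_mul_simple_self i₀, one_mul]
    have h := absLength_le hm hmp
    rw [hmlen, hn0] at h
    exact le_trans (min_le_right _ _) h

lemma absLength_refl_mul_le (i₀ : B) (w : W) :
    absLength (reflSet cs) (cs.simple i₀ * w) ≤ absLength (reflSet cs) w + 1 := by
  obtain ⟨l, hl, hp, hn⟩ := exists_word_absLength (exists_reflWord cs w)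
  have hl' : ∀ t ∈ (cs.simple i₀ :: l), t ∈ reflSet cs := by
    intro t ht
    rcases List.mem_cons.mp ht with rfl | ht
    · exact cs.isReflection_simple i₀
    · exact hl t ht
  have h := absLength_le hl' (by rw [List.prod_cons, hp])
  rwa [List.length_cons, hn] at h

end Aux

/-!
Statement 19: let (W,S) be a finite Coxeter system of rank d with exponents
1 = e₁ ≤ e₂ ≤ … ≤ e_d (characterized by W_T(q) = ∏_{i=1}^d (1 + e_i q)), s₀ ∈ S and
T₀ = {s₀ t : t ∈ T}.  Then Σ_{w ∈ W⁺} q^{ℓ_{T₀}(w)} = W_T(q)/(1+q)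
= ∏_{i=2}^d (1 + e_i q).
-/
theorem rank_gen_of_alternating {B W : Type*} [Group W] [Fintype W] [Fintype B]
    {M : CoxeterMatrix B} (cs : CoxeterSystem M W) (i₀ : B)
    (d : ℕ) (hd : d = Fintype.card B)  -- d is the Coxeter rank of W
    (e : ℕ → ℕ)  -- the exponents e₁, e₂, …, e_d of W (indexed by 0, …, d−1)
    (hmono : ∀ i j, i ≤ j → j < d → e i ≤ e j) (h1 : e 0 = 1)
    (hWT : (∑ w : W, (Polynomial.X : Polynomial ℤ) ^ absLength (reflSet cs) w) =
      ∏ i ∈ Finset.range d, (1 + Polynomial.C (e i : ℤ) * Polynomial.X)) :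
    (1 + Polynomial.X) *
        (∑ w ∈ Finset.univ.filter (fun w : W => w ∈ alternating cs),
          (Polynomial.X : Polynomial ℤ) ^ absLength (tZero cs i₀) w) =
      (∑ w : W, (Polynomial.X : Polynomial ℤ) ^ absLength (reflSet cs) w) ∧
    (∑ w ∈ Finset.univ.filter (fun w : W => w ∈ alternating cs),
        (Polynomial.X : Polynomial ℤ) ^ absLength (tZero cs i₀) w) =
      ∏ i ∈ Finset.Ico 1 d, (1 + Polynomial.C (e i : ℤ) * Polynomial.X) := by
  classical
  have hmem : ∀ w : W, w ∈ alternating cs ↔ cs.lengthParity w = 1 := fun w => Iff.rfl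
  -- Part 1
  have part1 : (1 + Polynomial.X) *
      (∑ w ∈ Finset.univ.filter (fun w : W => w ∈ alternating cs),
        (Polynomial.X : Polynomial ℤ) ^ absLength (tZero cs i₀) w) =
      (∑ w : W, (Polynomial.X : Polynomial ℤ) ^ absLength (reflSet cs) w) := by
    rw [Finset.mul_sum]
    have key : ∀ w ∈ Finset.univ.filter (fun w : W => w ∈ alternating cs),
        (1 + Polynomial.X) * (Polynomial.X : Polynomial ℤ) ^ absLength (tZero cs i₀) w =
        (Polynomial.X : Polynomial ℤ) ^ absLength (reflSet cs) w +
          (Polynomial.X : Polynomial ℤ) ^ absLength (reflSet cs) (cs.simple i₀ * w) := by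
      intro w hwmem
      have hw : cs.lengthParity w = 1 := (hmem w).mp (Finset.mem_filter.mp hwmem).2
      have hEa : Even (absLength (reflSet cs) w) := even_absLength_of_parity cs hw
      have hOb : Odd (absLength (reflSet cs) (cs.simple i₀ * w)) :=
        odd_absLength_of_parity cs i₀ hw
      have hab1 : absLength (reflSet cs) (cs.simple i₀ * w)
          ≤ absLength (reflSet cs) w + 1 := absLength_refl_mul_le cs i₀ w
      have hab2 : absLength (reflSet cs) w
          ≤ absLength (reflSet cs) (cs.simple i₀ * w) + 1 := by
        have h := absLength_refl_mul_le cs i₀ (cs.simple i₀ * w)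
        rwa [← mul_assoc, cs.simple_mul_simple_self i₀, one_mul] at h
      rw [absLength_tZero_eq cs i₀ hw]
      set a := absLength (reflSet cs) w with ha
      set b := absLength (reflSet cs) (cs.simple i₀ * w) with hb
      have hne : a ≠ b := by
        intro h; rw [h] at hEa; exact (Nat.not_odd_iff_even.mpr hEa) hOb
      rcases lt_or_gt_of_ne hne with h | h
      · have hb' : b = a + 1 := by omega
        rw [hb', min_eq_left (Nat.le_succ a)]
        ring
      · have ha' : a = b + 1 := by omega
        rw [ha', min_eq_right (Nat.le_succ b)]
        ring
    rw [Finset.sum_congr rfl key, Finset.sum_add_distrib]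
    rw [← Finset.sum_filter_add_sum_filter_not Finset.univ
      (fun w : W => w ∈ alternating cs)
      (fun w => (Polynomial.X : Polynomial ℤ) ^ absLength (reflSet cs) w)]
    congr 1
    refine Finset.sum_nbij' (fun w => cs.simple i₀ * w) (fun w => cs.simple i₀ * w)
      ?_ ?_ ?_ ?_ ?_
    · intro w hwmem
      have hw : cs.lengthParity w = 1 := (hmem w).mp (Finset.mem_filter.mp hwmem).2
      simp only [Finset.mem_filter, Finset.mem_univ, true_and]
      rw [hmem, map_mul, hw, mul_one, cs.lengthParity_simple]
      decide
    · intro w hwmem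
      have hw : cs.lengthParity w ≠ 1 := by
        have := (Finset.mem_filter.mp hwmem).2
        simpa [hmem] using this
      have hw' : cs.lengthParity w = Multiplicative.ofAdd (1 : ZMod 2) := by
        have hall : ∀ x : Multiplicative (ZMod 2),
            x ≠ 1 → x = Multiplicative.ofAdd (1 : ZMod 2) := by decide
        exact hall _ hw
      simp only [Finset.mem_filter, Finset.mem_univ, true_and]
      rw [hmem, map_mul, hw', cs.lengthParity_simple, ← ofAdd_add]
      decide
    · intro w _
      show cs.simple i₀ * (cs.simple i₀ * w) = w
      rw [← mul_assoc, cs.simple_mul_simple_self i₀, one_mul]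
    · intro w _
      show cs.simple i₀ * (cs.simple i₀ * w) = w
      rw [← mul_assoc, cs.simple_mul_simple_self i₀, one_mul]
    · intro w _; rfl
  refine ⟨part1, ?_⟩
  -- Part 2
  have hd1 : 0 < d := by rw [hd]; exact Fintype.card_pos_iff.mpr ⟨i₀⟩
  have hsplit : (∏ i ∈ Finset.range d, (1 + Polynomial.C (e i : ℤ) * Polynomial.X)) =
      (1 + Polynomial.X) *
        ∏ i ∈ Finset.Ico 1 d, (1 + Polynomial.C (e i : ℤ) * Polynomial.X) := by
    rw [Finset.prod_range_eq_mul_Ico _ hd1, h1]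
    norm_num
  have hne : (1 + Polynomial.X : Polynomial ℤ) ≠ 0 := by
    intro h
    have := congrArg (fun p => Polynomial.coeff p 0) h
    simp at this
  apply mul_left_cancel₀ hne
  rw [part1, hWT, hsplit]
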